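/- For every p ≥ 3 and q ≥ 3, the spectral radius (largest adjacency eigenvalue) of the graph H(p,q), formed by joining a p-cycle and a q-cycle by an edge, is strictly greater than √5. -/

import Mathlib

open Polynomial

/-- The characteristic polynomial (over `ℝ`) of the adjacency matrix of a finite graph. -/
noncomputable def graphCharpoly {V : Type*} [Fintype V] [DecidableEq V]
    (G : SimpleGraph V) : Polynomial ℝ :=
  letI := Classical.decRel G.Adj
  (G.adjMatrix ℝ).charpoly

/-- `Q_{P_n}`: the characteristic polynomial of the path on `n` vertices. -/
noncomputable def Qpath (n : ℕ) : Polynomial ℝ := graphCharpoly (SimpleGraph.pathGraph n)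

/-- `Q_{C_n}`: the characteristic polynomial of the cycle on `n` vertices. -/
noncomputable def Qcycle (n : ℕ) : Polynomial ℝ := graphCharpoly (SimpleGraph.cycleGraph n)

/-- The adjacency matrix (over `ℝ`) of a finite graph. -/
noncomputable def adjMat {V : Type*} [Fintype V] [DecidableEq V]
    (G : SimpleGraph V) : Matrix V V ℝ :=
  letI := Classical.decRel G.Adj
  G.adjMatrix ℝ

/-- `H(p,q)`: a `p`-cycle and a `q`-cycle joined by a single edge. -/
def dumbbell (p q : ℕ) : SimpleGraph (Fin p ⊕ Fin q) :=
  SimpleGraph.fromRel (fun a b =>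
    match a, b with
    | Sum.inl i, Sum.inl j => ((i : ℕ) + 1) % p = (j : ℕ)
    | Sum.inr i, Sum.inr j => ((i : ℕ) + 1) % q = (j : ℕ)
    | Sum.inl i, Sum.inr j => (i : ℕ) = 0 ∧ (j : ℕ) = 0
    | _, _ => False)

open Matrix

lemma rayleigh_le {n : Type*} [Fintype n] [DecidableEq n] [Nonempty n]
    {A : Matrix n n ℝ} (hA : A.IsHermitian) (x : n → ℝ) :
    x ⬝ᵥ (A *ᵥ x) ≤ (⨆ i, hA.eigenvalues i) * (x ⬝ᵥ x) := by
  classical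
  set U : Matrix n n ℝ := (hA.eigenvectorUnitary : Matrix n n ℝ) with hU
  set y : n → ℝ := Uᵀ *ᵥ x with hy
  have hspec := hA.spectral_theorem
  have hxU : x ᵥ* U = y := by
    rw [hy, ← vecMul_transpose, transpose_transpose]
  have hstar : star U = Uᵀ := by
    rw [Matrix.star_eq_conjTranspose, conjTranspose_eq_transpose_of_trivial]
  have h1 : x ⬝ᵥ (A *ᵥ x) = ∑ i, hA.eigenvalues i * (y i)^2 := by
    conv_lhs => rw [hspec, Unitary.conjStarAlgAut_apply]
    rw [← hU, hstar, ← mulVec_mulVec, ← mulVec_mulVec, dotProduct_mulVec x U, hxU]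
    simp [dotProduct, mulVec_diagonal, mul_comm, sq, mul_assoc, mul_left_comm, ← hy]
  have h2 : x ⬝ᵥ x = ∑ i, (y i)^2 := by
    have hyy : y ⬝ᵥ y = x ⬝ᵥ ((U * Uᵀ) *ᵥ x) := by
      rw [← mulVec_mulVec, dotProduct_mulVec x U, hxU, hy, dotProduct_mulVec,
        ← vecMul_transpose, transpose_transpose]
    have hone : U * Uᵀ = 1 := by
      have := (Matrix.mem_unitaryGroup_iff).mp hA.eigenvectorUnitary.2
      rwa [hstar] at this
    rw [hone, one_mulVec] at hyy
    rw [← hyy]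
    simp [dotProduct, sq]
  rw [h1, h2, Finset.mul_sum]
  apply Finset.sum_le_sum
  intro i _
  have hle : hA.eigenvalues i ≤ ⨆ j, hA.eigenvalues j :=
    le_ciSup (Set.Finite.bddAbove (Set.finite_range _)) i
  nlinarith [sq_nonneg (y i)]

noncomputable def tgr : ℝ := (Real.sqrt 5 - 1) / 2

lemma sqrt5_sq : Real.sqrt 5 ^ 2 = 5 := Real.sq_sqrt (by norm_num)
lemma sqrt5_gt : (2:ℝ) < Real.sqrt 5 := by nlinarith [sqrt5_sq, Real.sqrt_nonneg 5]
lemma sqrt5_lt : Real.sqrt 5 < 3 := by nlinarith [sqrt5_sq, Real.sqrt_nonneg 5]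
lemma tgr_pos : 0 < tgr := by unfold tgr; nlinarith [sqrt5_gt]
lemma tgr_lt_one : tgr < 1 := by unfold tgr; nlinarith [sqrt5_lt]
lemma tgr_half : (1:ℝ)/2 < tgr := by unfold tgr; nlinarith [sqrt5_gt]
lemma tgr_sq : tgr ^ 2 = 1 - tgr := by unfold tgr; nlinarith [sqrt5_sq]
lemma sqrt5_eq : Real.sqrt 5 = 2 * tgr + 1 := by unfold tgr; ring
lemma tgr_key (d : ℕ) : tgr ^ d + tgr ^ (d+2) = Real.sqrt 5 * tgr ^ (d+1) := by
  have h1 : tgr ^ (d+2) = tgr ^ d * tgr ^ 2 := by ring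
  have h2 : tgr ^ (d+1) = tgr ^ d * tgr := by ring
  rw [h1, h2, sqrt5_eq, tgr_sq]; ring_nf; linear_combination (-2 * tgr^d) * tgr_sq
lemma tgr_pow_pos (d : ℕ) : 0 < tgr ^ d := pow_pos tgr_pos d
lemma tgr_pow_lt (d : ℕ) : tgr ^ (d+1) < tgr ^ d := by
  have := tgr_pow_pos d
  calc tgr ^ (d+1) = tgr ^ d * tgr := by ring
  _ < tgr ^ d * 1 := by nlinarith [tgr_lt_one]
  _ = tgr ^ d := by ring

def dcyc (p k : ℕ) : ℕ := min k (p - k)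

lemma mod_succ {p i : ℕ} (hip : i < p) : (i+1) % p = if i + 1 = p then 0 else i + 1 := by
  split_ifs with h
  · rw [h, Nat.mod_self]
  · exact Nat.mod_eq_of_lt (by omega)

lemma mod_pred {p i : ℕ} (hp : 1 ≤ p) (hip : i < p) :
    (i + (p-1)) % p = if i = 0 then p - 1 else i - 1 := by
  split_ifs with h
  · subst h; simp [Nat.mod_eq_of_lt (show p - 1 < p by omega)]
  · have h1 : i + (p-1) = (i-1) + p := by omega
    rw [h1, Nat.add_mod_right]
    exact Nat.mod_eq_of_lt (by omega)

lemma cyc_ineq {p : ℕ} (hp : 3 ≤ p) {i : ℕ} (hip : i < p) :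
    Real.sqrt 5 * tgr ^ dcyc p i ≤
      tgr ^ dcyc p ((i+1) % p) + tgr ^ dcyc p ((i + (p-1)) % p) + (if i = 0 then 1 else 0) := by
  rw [mod_succ hip, mod_pred (by omega) hip]
  by_cases hi0 : i = 0
  · subst hi0
    rw [if_pos rfl, if_pos rfl, if_neg (by omega)]
    have e0 : dcyc p 0 = 0 := by unfold dcyc; omega
    have e1 : dcyc p 1 = 1 := by unfold dcyc; omega
    have e2 : dcyc p (p-1) = 1 := by unfold dcyc; omega
    rw [e0, e1, e2, sqrt5_eq]; ring_nf; rfl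
  rw [if_neg hi0, if_neg hi0]
  rcases Nat.lt_trichotomy (2*i) p with h2 | h2 | h2
  · -- lower half
    have hna : ¬ (i + 1 = p) := by omega
    rw [if_neg hna]
    obtain ⟨k, rfl⟩ : ∃ k, i = k + 1 := ⟨i-1, by omega⟩
    rcases eq_or_lt_of_le (by omega : 2*(k+1)+1 ≤ p) with hB | hA
    · -- 2i+1 = p
      have e0 : dcyc p (k+1) = k+1 := by unfold dcyc; omega
      have e1 : dcyc p (k+1+1) = k+1 := by unfold dcyc; omega
      have e2 : dcyc p (k+1-1) = k := by unfold dcyc; omega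
      rw [e0, e1, e2]
      have := tgr_key k
      have := tgr_pow_lt (k+1)
      linarith
    · -- 2i+2 ≤ p
      have e0 : dcyc p (k+1) = k+1 := by unfold dcyc; omega
      have e1 : dcyc p (k+1+1) = k+2 := by unfold dcyc; omega
      have e2 : dcyc p (k+1-1) = k := by unfold dcyc; omega
      rw [e0, e1, e2]
      have := tgr_key k
      linarith
  · -- 2i = p
    have hna : ¬ (i + 1 = p) := by omega
    rw [if_neg hna]
    obtain ⟨k, rfl⟩ : ∃ k, i = k + 1 := ⟨i-1, by omega⟩
    have e0 : dcyc p (k+1) = k+1 := by unfold dcyc; omega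
    have e1 : dcyc p (k+1+1) = k := by unfold dcyc; omega
    have e2 : dcyc p (k+1-1) = k := by unfold dcyc; omega
    rw [e0, e1, e2]
    have := tgr_key k
    have := tgr_pow_lt (k+1)
    have := tgr_pow_lt k
    linarith
  · -- upper half
    by_cases hna : i + 1 = p
    · rw [if_pos hna]
      have e0 : dcyc p i = 1 := by unfold dcyc; omega
      have e1 : dcyc p 0 = 0 := by unfold dcyc; omega
      have e2 : dcyc p (i-1) = min (i-1) 2 := by unfold dcyc; omega
      rw [e0, e1, e2]
      by_cases hp3 : p = 3
      · have : min (i-1) 2 = 1 := by omega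
        rw [this]
        have h1 := tgr_sq
        have h2 := tgr_half
        rw [sqrt5_eq]
        nlinarith
      · have : min (i-1) 2 = 2 := by omega
        rw [this]
        have := tgr_key 0
        simp at this ⊢
        linarith
    · rw [if_neg hna]
      obtain ⟨k, hk⟩ : ∃ k, p - i = k + 1 ∧ 1 ≤ k := ⟨p-i-1, by omega⟩
      obtain ⟨k2, rfl⟩ : ∃ m, k = m + 1 := ⟨k-1, by omega⟩
      rcases eq_or_lt_of_le (by omega : p + 1 ≤ 2*i) with hE2 | hE1
      · -- 2i = p+1
        have e0 : dcyc p i = k2+2 := by unfold dcyc; omega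
        have e1 : dcyc p (i+1) = k2+1 := by unfold dcyc; omega
        have e2 : dcyc p (i-1) = k2+2 := by unfold dcyc; omega
        rw [e0, e1, e2]
        have := tgr_key (k2+1)
        have := tgr_pow_lt (k2+2)
        linarith
      · -- 2i ≥ p+2
        have e0 : dcyc p i = k2+2 := by unfold dcyc; omega
        have e1 : dcyc p (i+1) = k2+1 := by unfold dcyc; omega
        have e2 : dcyc p (i-1) = k2+3 := by unfold dcyc; omega
        rw [e0, e1, e2]
        have := tgr_key (k2+1)
        linarith

lemma cyc_strict {p : ℕ} (hp : 3 ≤ p) :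
    Real.sqrt 5 * tgr ^ dcyc p (p/2) <
      tgr ^ dcyc p ((p/2+1) % p) + tgr ^ dcyc p ((p/2 + (p-1)) % p)
        + (if p/2 = 0 then 1 else 0) := by
  obtain ⟨i, hi⟩ : ∃ i, i = p / 2 := ⟨_, rfl⟩
  rw [← hi]
  have hip : i < p := by omega
  
  have hi1 : 1 ≤ i := by omega
  have h0 : ¬ (i = 0) := by omega
  have h1 : ¬ (i + 1 = p) := by omega
  rw [mod_succ hip, mod_pred (by omega) hip, if_neg h1, if_neg h0, if_neg h0]
  obtain ⟨k, rfl⟩ : ∃ k, i = k + 1 := ⟨i-1, by omega⟩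
  rcases Nat.even_or_odd p with he | ho
  · -- even: 2i = p
    have h2 : 2*(k+1) = p := by obtain ⟨c, hc⟩ := he; omega
    have e0 : dcyc p (k+1) = k+1 := by unfold dcyc; omega
    have e1 : dcyc p (k+1+1) = k := by unfold dcyc; omega
    have e2 : dcyc p (k+1-1) = k := by unfold dcyc; omega
    rw [e0, e1, e2]
    have := tgr_key k
    have := tgr_pow_lt (k+1)
    have := tgr_pow_lt k
    linarith
  · -- odd: 2i+1 = p
    have h2 : 2*(k+1)+1 = p := by obtain ⟨c, hc⟩ := ho; omega
    have e0 : dcyc p (k+1) = k+1 := by unfold dcyc; omega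
    have e1 : dcyc p (k+1+1) = k+1 := by unfold dcyc; omega
    have e2 : dcyc p (k+1-1) = k := by unfold dcyc; omega
    rw [e0, e1, e2]
    have := tgr_key k
    have := tgr_pow_lt (k+1)
    linarith

/-- `H(p,q)`: a `p`-cycle and a `q`-cycle joined by a single edge. -/


lemma adjMat_apply {V : Type*} [Fintype V] [DecidableEq V] (G : SimpleGraph V)
    [DecidableRel G.Adj] (u v : V) :
    adjMat G u v = if G.Adj u v then 1 else 0 := by
  unfold adjMat
  simp only [SimpleGraph.adjMatrix_apply]
  congr!

lemma dumbbell_adj_ll {p q : ℕ} (i j : Fin p) :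
    (dumbbell p q).Adj (Sum.inl i) (Sum.inl j) ↔
      i ≠ j ∧ (((i:ℕ)+1) % p = (j:ℕ) ∨ ((j:ℕ)+1) % p = (i:ℕ)) := by
  simp [dumbbell, SimpleGraph.fromRel_adj]

lemma dumbbell_adj_lr {p q : ℕ} (i : Fin p) (j : Fin q) :
    (dumbbell p q).Adj (Sum.inl i) (Sum.inr j) ↔ ((i:ℕ) = 0 ∧ (j:ℕ) = 0) := by
  simp [dumbbell, SimpleGraph.fromRel_adj]

lemma dumbbell_adj_rl {p q : ℕ} (j : Fin q) (i : Fin p) :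
    (dumbbell p q).Adj (Sum.inr j) (Sum.inl i) ↔ ((i:ℕ) = 0 ∧ (j:ℕ) = 0) := by
  simp [dumbbell, SimpleGraph.fromRel_adj]

lemma dumbbell_adj_rr {p q : ℕ} (i j : Fin q) :
    (dumbbell p q).Adj (Sum.inr i) (Sum.inr j) ↔
      i ≠ j ∧ (((i:ℕ)+1) % q = (j:ℕ) ∨ ((j:ℕ)+1) % q = (i:ℕ)) := by
  simp [dumbbell, SimpleGraph.fromRel_adj]

lemma sum_ite_pair {α : Type*} [Fintype α] [DecidableEq α] {P : α → Prop} [DecidablePred P]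
    {a b : α} (hab : a ≠ b) (h : ∀ j, P j ↔ j = a ∨ j = b) (f : α → ℝ) :
    (∑ j, (if P j then (1:ℝ) else 0) * f j) = f a + f b := by
  have key : ∀ j, (if P j then (1:ℝ) else 0) * f j
      = (if j = a then f j else 0) + (if j = b then f j else 0) := by
    intro j
    by_cases hja : j = a
    · subst hja; rw [if_pos ((h j).mpr (Or.inl rfl)), if_pos rfl, if_neg hab]; ring
    · by_cases hjb : j = b
      · subst hjb; rw [if_pos ((h j).mpr (Or.inr rfl)), if_neg hja, if_pos rfl]; ring
      · rw [if_neg (fun hx => ((h j).mp hx).elim hja hjb), if_neg hja, if_neg hjb]; ring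
  simp only [key, Finset.sum_add_distrib, Finset.sum_ite_eq', Finset.mem_univ, if_true]

lemma sum_ite_single {α : Type*} [Fintype α] [DecidableEq α] {P : α → Prop} [DecidablePred P]
    {a : α} (h : ∀ j, P j ↔ j = a) (f : α → ℝ) :
    (∑ j, (if P j then (1:ℝ) else 0) * f j) = f a := by
  have key : ∀ j, (if P j then (1:ℝ) else 0) * f j = (if j = a then f j else 0) := by
    intro j
    by_cases hja : j = a
    · subst hja; rw [if_pos ((h j).mpr rfl), if_pos rfl]; ring
    · rw [if_neg (fun hx => hja ((h j).mp hx)), if_neg hja]; ring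
  simp only [key, Finset.sum_ite_eq', Finset.mem_univ, if_true]
noncomputable def xvec (p q : ℕ) : Fin p ⊕ Fin q → ℝ :=
  Sum.elim (fun i => tgr ^ dcyc p (i:ℕ)) (fun j => tgr ^ dcyc q (j:ℕ))

lemma cyc_sum {p : ℕ} (hp : 3 ≤ p) (i : Fin p) (c : ℝ) :
    (∑ j : Fin p,
      (if (i ≠ j ∧ (((i:ℕ)+1) % p = (j:ℕ) ∨ ((j:ℕ)+1) % p = (i:ℕ))) then c else 0)
        * tgr ^ dcyc p (j:ℕ))
      = c * tgr ^ dcyc p (((i:ℕ)+1) % p) + c * tgr ^ dcyc p (((i:ℕ) + (p-1)) % p) := by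
  classical
  have hp0 : 0 < p := by omega
  have hiv := i.isLt
  have hc : ∀ j : Fin p, (if (i ≠ j ∧ (((i:ℕ)+1) % p = (j:ℕ) ∨ ((j:ℕ)+1) % p = (i:ℕ)))
      then c else 0) * tgr ^ dcyc p (j:ℕ)
      = c * ((if (i ≠ j ∧ (((i:ℕ)+1) % p = (j:ℕ) ∨ ((j:ℕ)+1) % p = (i:ℕ)))
      then (1:ℝ) else 0) * tgr ^ dcyc p (j:ℕ)) := by
    intro j; split_ifs <;> ring
  simp only [hc, ← Finset.mul_sum]
  set a : Fin p := ⟨((i:ℕ)+1) % p, Nat.mod_lt _ hp0⟩ with ha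
  set b : Fin p := ⟨((i:ℕ) + (p-1)) % p, Nat.mod_lt _ hp0⟩ with hb
  have hab : a ≠ b := by
    simp only [ha, hb, Ne, Fin.mk.injEq]
    rw [mod_succ hiv, mod_pred (by omega) hiv]
    split_ifs <;> omega
  have hclass : ∀ j : Fin p,
      (i ≠ j ∧ (((i:ℕ)+1) % p = (j:ℕ) ∨ ((j:ℕ)+1) % p = (i:ℕ))) ↔ j = a ∨ j = b := by
    intro j
    have hjv := j.isLt
    simp only [Ne, Fin.ext_iff, ha, hb]
    rw [mod_succ hiv, mod_succ hjv, mod_pred (by omega) hiv]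
    split_ifs <;> omega
  rw [sum_ite_pair hab hclass (fun j : Fin p => tgr ^ dcyc p (j:ℕ))]
  simp only [ha, hb]
  ring

lemma bridge_sum {p q : ℕ} (hq : 3 ≤ q) (i : Fin p) :
    (∑ j : Fin q, (if ((i:ℕ) = 0 ∧ (j:ℕ) = 0) then (1:ℝ) else 0) * tgr ^ dcyc q (j:ℕ))
      = if (i:ℕ) = 0 then 1 else 0 := by
  classical
  by_cases hi0 : (i:ℕ) = 0
  · have hcl : ∀ j : Fin q, ((i:ℕ) = 0 ∧ (j:ℕ) = 0) ↔ j = (⟨0, by omega⟩ : Fin q) := by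
      intro j; simp [hi0, Fin.ext_iff]
    rw [sum_ite_single hcl (fun j : Fin q => tgr ^ dcyc q (j:ℕ)), if_pos hi0]
    simp [dcyc]
  · simp [hi0]

lemma mulVec_inl {p q : ℕ} (hp : 3 ≤ p) (hq : 3 ≤ q) (i : Fin p) :
    (adjMat (dumbbell p q) *ᵥ xvec p q) (Sum.inl i) =
      tgr ^ dcyc p (((i:ℕ)+1) % p) + tgr ^ dcyc p (((i:ℕ) + (p-1)) % p)
        + (if (i:ℕ) = 0 then 1 else 0) := by
  classical
  simp only [Matrix.mulVec, dotProduct, Fintype.sum_sum_type,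
    adjMat_apply, dumbbell_adj_ll, dumbbell_adj_lr, xvec, Sum.elim_inl, Sum.elim_inr]
  rw [cyc_sum hp i (1:ℝ), bridge_sum hq i]
  ring

lemma mulVec_inr {p q : ℕ} (hp : 3 ≤ p) (hq : 3 ≤ q) (j : Fin q) :
    (adjMat (dumbbell p q) *ᵥ xvec p q) (Sum.inr j) =
      tgr ^ dcyc q (((j:ℕ)+1) % q) + tgr ^ dcyc q (((j:ℕ) + (q-1)) % q)
        + (if (j:ℕ) = 0 then 1 else 0) := by
  classical
  simp only [Matrix.mulVec, dotProduct, Fintype.sum_sum_type,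
    adjMat_apply, dumbbell_adj_rr, dumbbell_adj_rl, xvec, Sum.elim_inl, Sum.elim_inr]
  have hswap : ∀ i : Fin p, (if ((i:ℕ) = 0 ∧ (j:ℕ) = 0) then (1:ℝ) else 0)
      = (if ((j:ℕ) = 0 ∧ (i:ℕ) = 0) then (1:ℝ) else 0) := by
    intro i; split_ifs with h1 h2 <;> simp_all
  simp only [hswap]
  rw [cyc_sum hq j (1:ℝ), bridge_sum hp j]
  ring

/-- For every `p ≥ 3` and `q ≥ 3`, the spectral radius (largest adjacency eigenvalue)
of `H(p,q)` is strictly greater than `√5`. -/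
theorem dumbbell_spectral_radius_gt_sqrt_five (p q : ℕ) (hp : 3 ≤ p) (hq : 3 ≤ q)
    (hA : (adjMat (dumbbell p q)).IsHermitian) :
    Real.sqrt 5 < ⨆ i, hA.eigenvalues i := by
  classical
  haveI : Nonempty (Fin p ⊕ Fin q) := ⟨Sum.inl ⟨0, by omega⟩⟩
  set x : Fin p ⊕ Fin q → ℝ := xvec p q with hx
  have hxpos : ∀ u, 0 < x u := by
    rintro (i | j) <;> exact tgr_pow_pos _
  have hpoint : ∀ u, Real.sqrt 5 * x u ≤ (adjMat (dumbbell p q) *ᵥ x) u := by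
    rintro (i | j)
    · rw [hx, mulVec_inl hp hq i]
      exact cyc_ineq hp i.isLt
    · rw [hx, mulVec_inr hp hq j]
      exact cyc_ineq hq j.isLt
  set u₀ : Fin p ⊕ Fin q := Sum.inl ⟨p/2, by omega⟩ with hu₀
  have hstrict : Real.sqrt 5 * x u₀ < (adjMat (dumbbell p q) *ᵥ x) u₀ := by
    rw [hu₀, hx, mulVec_inl hp hq]
    exact cyc_strict hp
  have hsum : Real.sqrt 5 * (x ⬝ᵥ x) < x ⬝ᵥ (adjMat (dumbbell p q) *ᵥ x) := by
    rw [dotProduct, dotProduct, Finset.mul_sum]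
    apply Finset.sum_lt_sum
    · intro u _
      have h1 := hpoint u
      have h2 := hxpos u
      nlinarith
    · refine ⟨u₀, Finset.mem_univ _, ?_⟩
      have h2 := hxpos u₀
      nlinarith [hstrict]
  have hray := rayleigh_le hA x
  have hxx : 0 < x ⬝ᵥ x := by
    rw [dotProduct]
    apply Finset.sum_pos
    · intro u _; have := hxpos u; nlinarith
    · exact Finset.univ_nonempty
  nlinarith [hray, hsum, hxx]
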